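/- arXiv:1210.0524 — 2 statements merged into one kernel-verified Lean document; each statement's English description precedes it below -/
import Mathlib

section
/- For any finite graph G, the game domination number satisfies γ(G) ≤ γ_g(G) ≤ 2γ(G) − 1, where γ(G) is the domination number. -/
open Finset

namespace DomGame

variable {V : Type*} [Fintype V] [DecidableEq V]

/-- Closed neighborhood of `v` in `G`, as a `Finset`. -/
noncomputable def cn (G : SimpleGraph V) (v : V) : Finset V :=
  haveI : DecidablePred (fun u : V => u = v ∨ G.Adj v u) := fun _ => Classical.propDecidable _
  Finset.univ.filter (fun u : V => u = v ∨ G.Adj v u)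

/-- Value (number of remaining moves, optimal play) of the domination game on `G`,
with fuel, where `D` is the set of already dominated vertices and `who = true`
means Dominator is to move (minimizing); `who = false` means Staller (maximizing). -/
noncomputable def auxVal (G : SimpleGraph V) : ℕ → Bool → Finset V → ℕ
  | 0, _, _ => 0
  | n + 1, who, D =>
    if D = Finset.univ then 0
    else
      haveI : DecidablePred (fun v : V => ¬ cn G v ⊆ D) := fun _ => Classical.propDecidable _
      let moves : Finset V := Finset.univ.filter (fun v : V => ¬ cn G v ⊆ D)
      if who then
        WithTop.untopD 0 ((moves.image (fun v => 1 + auxVal G n false (D ∪ cn G v))).min)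
      else
        moves.sup (fun v => 1 + auxVal G n true (D ∪ cn G v))

/-- Remaining moves of the domination game on the partially dominated graph `(G, D)`,
Dominator to move, both players optimal. -/
noncomputable def gVal (G : SimpleGraph V) (D : Finset V) : ℕ :=
  auxVal G (Fintype.card V) true D

/-- Remaining moves, Staller to move. -/
noncomputable def gVal' (G : SimpleGraph V) (D : Finset V) : ℕ :=
  auxVal G (Fintype.card V) false D

/-- The game domination number (Dominator starts). -/
noncomputable def gammaG (G : SimpleGraph V) : ℕ := gVal G ∅

/-- The Staller-start game domination number. -/
noncomputable def gammaG' (G : SimpleGraph V) : ℕ := gVal' G ∅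

/-- `S` is a dominating set of `G`. -/
def IsDomSet (G : SimpleGraph V) (S : Finset V) : Prop :=
  ∀ v : V, ∃ u ∈ S, u = v ∨ G.Adj u v

/-- The domination number of `G`. -/
noncomputable def gamma (G : SimpleGraph V) : ℕ :=
  sInf {n | ∃ S : Finset V, IsDomSet G S ∧ S.card = n}

end DomGame

namespace DomGame

variable {V : Type*} [Fintype V] [DecidableEq V]

lemma mem_cn {G : SimpleGraph V} {u v : V} : v ∈ cn G u ↔ v = u ∨ G.Adj u v := by
  classical
  simp [cn]

lemma self_mem_cn {G : SimpleGraph V} (u : V) : u ∈ cn G u := mem_cn.2 (Or.inl rfl)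

/-- `S` together with the already-dominated `D` covers everything. -/
def Covers (G : SimpleGraph V) (D S : Finset V) : Prop :=
  D ∪ S.biUnion (cn G) = Finset.univ

noncomputable def gamD (G : SimpleGraph V) (D : Finset V) : ℕ :=
  sInf {n | ∃ S : Finset V, Covers G D S ∧ S.card = n}

lemma covers_univ (G : SimpleGraph V) (D : Finset V) : Covers G D Finset.univ := by
  apply Finset.eq_univ_of_forall
  intro v
  exact Finset.mem_union.2 (Or.inr (Finset.mem_biUnion.2 ⟨v, Finset.mem_univ v, self_mem_cn v⟩))

lemma gamD_spec (G : SimpleGraph V) (D : Finset V) :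
    ∃ S : Finset V, Covers G D S ∧ S.card = gamD G D := by
  have hne : {n | ∃ S : Finset V, Covers G D S ∧ S.card = n}.Nonempty :=
    ⟨(Finset.univ : Finset V).card, Finset.univ, covers_univ G D, rfl⟩
  exact Nat.sInf_mem hne

lemma gamD_le {G : SimpleGraph V} {D S : Finset V} (h : Covers G D S) :
    gamD G D ≤ S.card := Nat.sInf_le ⟨S, h, rfl⟩

lemma gamD_univ (G : SimpleGraph V) : gamD G (Finset.univ : Finset V) = 0 :=
  Nat.le_zero.1 (by simpa using gamD_le (G := G) (S := ∅) (by simp [Covers]))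

lemma covers_mono {G : SimpleGraph V} {D D' S : Finset V} (h : D ⊆ D') (hS : Covers G D S) :
    Covers G D' S := by
  unfold Covers at *
  apply Finset.eq_univ_of_forall
  intro v
  have hv : v ∈ D ∪ S.biUnion (cn G) := hS ▸ Finset.mem_univ v
  rcases Finset.mem_union.1 hv with h1 | h2
  · exact Finset.mem_union.2 (Or.inl (h h1))
  · exact Finset.mem_union.2 (Or.inr h2)

lemma gamD_mono {G : SimpleGraph V} {D D' : Finset V} (h : D ⊆ D') :
    gamD G D' ≤ gamD G D := by
  obtain ⟨S, hS, hc⟩ := gamD_spec G D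
  calc gamD G D' ≤ S.card := gamD_le (covers_mono h hS)
    _ = gamD G D := hc

lemma gamD_step {G : SimpleGraph V} (D : Finset V) (v : V) :
    gamD G D ≤ 1 + gamD G (D ∪ cn G v) := by
  obtain ⟨S, hS, hc⟩ := gamD_spec G (D ∪ cn G v)
  have hcov : Covers G D (insert v S) := by
    unfold Covers at *
    apply Finset.eq_univ_of_forall
    intro u
    have hu : u ∈ (D ∪ cn G v) ∪ S.biUnion (cn G) := hS ▸ Finset.mem_univ u
    simp only [Finset.mem_union, Finset.mem_biUnion] at hu ⊢
    rcases hu with (h | h) | ⟨w, hw, hwc⟩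
    · exact Or.inl h
    · exact Or.inr ⟨v, Finset.mem_insert_self _ _, h⟩
    · exact Or.inr ⟨w, Finset.mem_insert_of_mem hw, hwc⟩
  calc gamD G D ≤ (insert v S).card := gamD_le hcov
    _ ≤ S.card + 1 := Finset.card_insert_le _ _
    _ = 1 + gamD G (D ∪ cn G v) := by omega

lemma gamD_pos {G : SimpleGraph V} {D : Finset V} (h : D ≠ Finset.univ) :
    1 ≤ gamD G D := by
  by_contra hc
  push_neg at hc
  obtain ⟨S, hS, hcard⟩ := gamD_spec G D
  have hS0 : S = ∅ := Finset.card_eq_zero.1 (by omega)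
  subst hS0
  simp only [Covers, Finset.biUnion_empty, Finset.union_empty] at hS
  exact h hS

lemma covers_erase {G : SimpleGraph V} {D S : Finset V} {v : V} (hv : v ∈ S)
    (hS : Covers G D S) : Covers G (D ∪ cn G v) (S.erase v) := by
  unfold Covers at *
  apply Finset.eq_univ_of_forall
  intro u
  have hu : u ∈ D ∪ S.biUnion (cn G) := hS ▸ Finset.mem_univ u
  simp only [Finset.mem_union, Finset.mem_biUnion, Finset.mem_erase] at hu ⊢
  rcases hu with h | ⟨w, hw, hwc⟩
  · tauto
  · by_cases hwv : w = v
    · subst hwv; tauto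
    · exact Or.inr ⟨w, ⟨hwv, hw⟩, hwc⟩

lemma exists_move {G : SimpleGraph V} {D : Finset V} (h : D ≠ Finset.univ) :
    ∃ v, ¬ cn G v ⊆ D := by
  obtain ⟨u, hu⟩ : ∃ u, u ∉ D := by
    by_contra hc; push_neg at hc; exact h (Finset.eq_univ_of_forall hc)
  exact ⟨u, fun hsub => hu (hsub (self_mem_cn u))⟩

lemma card_sdiff_lt {G : SimpleGraph V} {D : Finset V} {v : V} (hv : ¬ cn G v ⊆ D) :
    (Finset.univ \ (D ∪ cn G v)).card < (Finset.univ \ D).card := by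
  apply Finset.card_lt_card
  obtain ⟨x, hx, hxD⟩ := Finset.not_subset.1 hv
  refine (Finset.ssubset_iff_of_subset
    (Finset.sdiff_subset_sdiff (Finset.Subset.refl _) Finset.subset_union_left)).2 ?_
  exact ⟨x, by simp [hxD], by simp [hx]⟩

lemma untop'_min_spec {α : Type*} {s : Finset α} (hs : s.Nonempty) (f : α → ℕ) :
    ∃ v ∈ s, WithTop.untopD 0 ((s.image f).min) = f v ∧ ∀ w ∈ s, f v ≤ f w := by
  classical
  have hne : (s.image f).Nonempty := hs.image f
  obtain ⟨v, hv, hfv⟩ := Finset.mem_image.1 (Finset.min'_mem _ hne)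
  refine ⟨v, hv, ?_, ?_⟩
  · rw [← Finset.coe_min' hne, WithTop.untopD_coe, hfv]
  · intro w hw
    rw [hfv]
    exact Finset.min'_le _ _ (Finset.mem_image_of_mem f hw)


lemma auxVal_succ (G : SimpleGraph V) (n : ℕ) (who : Bool) (D : Finset V) :
    auxVal G (n+1) who D =
      if D = Finset.univ then 0
      else
        (if who then
          WithTop.untopD 0 (((Finset.univ.filter (fun v : V => ¬ cn G v ⊆ D)).image
            (fun v => 1 + auxVal G n false (D ∪ cn G v))).min)
        else (Finset.univ.filter (fun v : V => ¬ cn G v ⊆ D)).sup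
          (fun v => 1 + auxVal G n true (D ∪ cn G v))) := by
  rw [auxVal]
  by_cases hD : D = Finset.univ
  · rw [if_pos hD, if_pos hD]
  · rw [if_neg hD, if_neg hD, Finset.filter_congr_decidable]

lemma auxVal_succ_true_choose (G : SimpleGraph V) (n : ℕ) {D : Finset V}
    (hD : D ≠ Finset.univ) :
    ∃ v, ¬ cn G v ⊆ D ∧
      auxVal G (n+1) true D = 1 + auxVal G n false (D ∪ cn G v) ∧
      (∀ w, ¬ cn G w ⊆ D → auxVal G (n+1) true D ≤ 1 + auxVal G n false (D ∪ cn G w)) := by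
  obtain ⟨v0, hv0⟩ := exists_move (G := G) hD
  have hne : (Finset.univ.filter (fun v : V => ¬ cn G v ⊆ D)).Nonempty :=
    ⟨v0, Finset.mem_filter.2 ⟨Finset.mem_univ _, hv0⟩⟩
  obtain ⟨v, hv, heq, hle⟩ := untop'_min_spec hne (fun v => 1 + auxVal G n false (D ∪ cn G v))
  have hval : auxVal G (n+1) true D =
      WithTop.untopD 0 (((Finset.univ.filter (fun v : V => ¬ cn G v ⊆ D)).image
        (fun v => 1 + auxVal G n false (D ∪ cn G v))).min) := by
    rw [auxVal_succ, if_neg hD, if_pos rfl]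
  refine ⟨v, (Finset.mem_filter.1 hv).2, by rw [hval]; exact heq, ?_⟩
  intro w hw
  rw [hval, heq]
  exact hle w (Finset.mem_filter.2 ⟨Finset.mem_univ _, hw⟩)

lemma auxVal_succ_false_choose (G : SimpleGraph V) (n : ℕ) {D : Finset V}
    (hD : D ≠ Finset.univ) :
    ∃ v, ¬ cn G v ⊆ D ∧
      auxVal G (n+1) false D = 1 + auxVal G n true (D ∪ cn G v) := by
  obtain ⟨v0, hv0⟩ := exists_move (G := G) hD
  have hne : (Finset.univ.filter (fun v : V => ¬ cn G v ⊆ D)).Nonempty :=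
    ⟨v0, Finset.mem_filter.2 ⟨Finset.mem_univ _, hv0⟩⟩
  obtain ⟨v, hv, heq⟩ := Finset.exists_mem_eq_sup
    (Finset.univ.filter (fun v : V => ¬ cn G v ⊆ D)) hne
    (fun v => 1 + auxVal G n true (D ∪ cn G v))
  refine ⟨v, (Finset.mem_filter.1 hv).2, ?_⟩
  rw [auxVal_succ, if_neg hD, if_neg (by decide)]
  exact heq

lemma auxVal_succ_false_le (G : SimpleGraph V) (n : ℕ) {D : Finset V} {m : ℕ}
    (h : ∀ v, ¬ cn G v ⊆ D → 1 + auxVal G n true (D ∪ cn G v) ≤ m) :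
    auxVal G (n+1) false D ≤ m := by
  rw [auxVal_succ]
  by_cases hD : D = Finset.univ
  · rw [if_pos hD]; exact Nat.zero_le m
  · rw [if_neg hD, if_neg (by decide)]
    apply Finset.sup_le
    intro v hv
    simp only [Finset.mem_filter] at hv
    exact h v hv.2

lemma gamD_le_auxVal (G : SimpleGraph V) :
    ∀ n (who : Bool) (D : Finset V), (Finset.univ \ D).card ≤ n →
      gamD G D ≤ auxVal G n who D := by
  intro n
  induction n with
  | zero =>
    intro who D h
    have hD : D = Finset.univ := by
      have h0 : (Finset.univ \ D) = ∅ := Finset.card_eq_zero.1 (by omega)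
      exact Finset.univ_subset_iff.1 (Finset.sdiff_eq_empty_iff_subset.1 h0)
    rw [hD, gamD_univ]
    exact Nat.zero_le _
  | succ n ih =>
    intro who D h
    by_cases hD : D = Finset.univ
    · rw [hD, gamD_univ]; exact Nat.zero_le _
    · cases who with
      | true =>
        obtain ⟨v, hv, heq, _⟩ := auxVal_succ_true_choose G n hD
        rw [heq]
        have hfuel : (Finset.univ \ (D ∪ cn G v)).card ≤ n := by
          have := card_sdiff_lt (G := G) (D := D) hv
          omega
        calc gamD G D ≤ 1 + gamD G (D ∪ cn G v) := gamD_step D v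
          _ ≤ 1 + auxVal G n false (D ∪ cn G v) := by
              have := ih false (D ∪ cn G v) hfuel; omega
      | false =>
        obtain ⟨v, hv, heq⟩ := auxVal_succ_false_choose G n hD
        rw [heq]
        have hfuel : (Finset.univ \ (D ∪ cn G v)).card ≤ n := by
          have := card_sdiff_lt (G := G) (D := D) hv
          omega
        calc gamD G D ≤ 1 + gamD G (D ∪ cn G v) := gamD_step D v
          _ ≤ 1 + auxVal G n true (D ∪ cn G v) := by
              have := ih true (D ∪ cn G v) hfuel; omega

lemma auxVal_le_gamD (G : SimpleGraph V) :
    ∀ n (D : Finset V),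
      auxVal G n true D ≤ 2 * gamD G D - 1 ∧ auxVal G n false D ≤ 2 * gamD G D := by
  intro n
  induction n with
  | zero => intro D; constructor <;> (rw [auxVal]; exact Nat.zero_le _)
  | succ n ih =>
    intro D
    by_cases hD : D = Finset.univ
    · constructor <;> (rw [auxVal, if_pos hD]; exact Nat.zero_le _)
    · have hpos : 1 ≤ gamD G D := gamD_pos hD
      constructor
      · -- Dominator to move
        obtain ⟨S, hS, hc⟩ := gamD_spec G D
        have hvS : ∃ v ∈ S, ¬ cn G v ⊆ D := by
          by_contra hcon
          push_neg at hcon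
          apply hD
          apply Finset.eq_univ_of_forall
          intro u
          have hu : u ∈ D ∪ S.biUnion (cn G) := hS ▸ Finset.mem_univ u
          rcases Finset.mem_union.1 hu with h1 | h2
          · exact h1
          · obtain ⟨w, hw, hwc⟩ := Finset.mem_biUnion.1 h2
            exact hcon w hw hwc
        obtain ⟨v, hvmem, hv⟩ := hvS
        obtain ⟨_, _, _, hle⟩ := auxVal_succ_true_choose G n hD
        have h1 : auxVal G (n+1) true D ≤ 1 + auxVal G n false (D ∪ cn G v) := hle v hv
        have h2 : auxVal G n false (D ∪ cn G v) ≤ 2 * gamD G (D ∪ cn G v) := (ih _).2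
        have h3 : gamD G (D ∪ cn G v) + 1 ≤ gamD G D := by
          have hee := gamD_le (covers_erase hvmem hS)
          have hcard : (S.erase v).card = S.card - 1 := Finset.card_erase_of_mem hvmem
          have hScard : 1 ≤ S.card := Finset.card_pos.2 ⟨v, hvmem⟩
          omega
        omega
      · -- Staller to move
        apply auxVal_succ_false_le
        intro v hv
        have h1 : auxVal G n true (D ∪ cn G v) ≤ 2 * gamD G (D ∪ cn G v) - 1 := (ih _).1
        have h2 : gamD G (D ∪ cn G v) ≤ gamD G D := gamD_mono Finset.subset_union_left
        omega

lemma gamma_eq_gamD (G : SimpleGraph V) : gamma G = gamD G (∅ : Finset V) := by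
  unfold gamma gamD
  congr 1
  ext n
  constructor
  · rintro ⟨S, hS, rfl⟩
    refine ⟨S, ?_, rfl⟩
    unfold Covers
    rw [Finset.empty_union]
    apply Finset.eq_univ_of_forall
    intro v
    obtain ⟨u, hu, huv⟩ := hS v
    refine Finset.mem_biUnion.2 ⟨u, hu, mem_cn.2 ?_⟩
    rcases huv with rfl | h
    · exact Or.inl rfl
    · exact Or.inr h
  · rintro ⟨S, hS, rfl⟩
    refine ⟨S, ?_, rfl⟩
    intro v
    unfold Covers at hS
    rw [Finset.empty_union] at hS
    have hv : v ∈ S.biUnion (cn G) := hS ▸ Finset.mem_univ v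
    obtain ⟨u, hu, hvc⟩ := Finset.mem_biUnion.1 hv
    rcases mem_cn.1 hvc with h | h
    · exact ⟨u, hu, Or.inl h.symm⟩
    · exact ⟨u, hu, Or.inr h⟩

end DomGame

/-- γ(G) ≤ γ_g(G) ≤ 2γ(G) − 1. -/
theorem stmt0 {V : Type*} [Fintype V] [DecidableEq V] (G : SimpleGraph V) :
    DomGame.gamma G ≤ DomGame.gammaG G ∧ DomGame.gammaG G ≤ 2 * DomGame.gamma G - 1 := by
  rw [DomGame.gamma_eq_gamD]
  have hfuel : (Finset.univ \ (∅ : Finset V)).card ≤ Fintype.card V := by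
    simp [Finset.card_univ]
  constructor
  · exact DomGame.gamD_le_auxVal G (Fintype.card V) true ∅ hfuel
  · exact (DomGame.auxVal_le_gamD G (Fintype.card V) ∅).1
end

section
/- In any partially dominated forest F that is not yet completely dominated, there exists a legal move for Staller which newly dominates at most two vertices. -/
open Finset

open SimpleGraph Walk in
private lemma stmt3_key {V : Type*} [DecidableEq V] (F : SimpleGraph V) (hF : F.IsAcyclic) {u x : V}
    (hux : x ≠ u) (hr : F.Reachable u x) :
    ∃ w : V, ∀ y : V, F.Adj x y → F.dist u y ≤ F.dist u x → y = w := by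
  obtain ⟨p, hp, hlen⟩ := hr.exists_path_of_dist
  obtain ⟨w, hxw, q, hq⟩ := Walk.exists_eq_cons_of_ne hux p.reverse
  refine ⟨w, fun y hy hdist => ?_⟩
  obtain ⟨r, hrpath, hrlen⟩ := (hr.trans hy.reachable).exists_path_of_dist
  by_cases hx : x ∈ r.support
  · -- the segment of r from x to y is the single edge, contradiction with dist
    exfalso
    have hdrop : (r.dropUntil x hx) = (SimpleGraph.Path.singleton hy : F.Path x y).1 := by
      have := (isAcyclic_iff_path_unique.mp hF)
        ⟨r.dropUntil x hx, hrpath.dropUntil hx⟩ (SimpleGraph.Path.singleton hy)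
      exact congrArg Subtype.val this
    have hlen1 : (r.dropUntil x hx).length = 1 := by
      rw [hdrop]; rfl
    have hsplit : (r.takeUntil x hx).length + (r.dropUntil x hx).length = r.length := by
      have := congrArg Walk.length (r.take_spec hx)
      rwa [Walk.length_append] at this
    have h1 : F.dist u x ≤ (r.takeUntil x hx).length := SimpleGraph.dist_le _
    omega
  · -- extend r by the edge y-x : unique path from u to x, so y = w
    have hxrev : x ∉ r.reverse.support := by
      rwa [Walk.support_reverse, List.mem_reverse]
    have hpath' : (Walk.cons hy r.reverse).IsPath := by
      rw [Walk.cons_isPath_iff]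
      exact ⟨hrpath.reverse, hxrev⟩
    have hEq : (Walk.cons hy r.reverse) = p.reverse := by
      have := (isAcyclic_iff_path_unique.mp hF)
        ⟨Walk.cons hy r.reverse, hpath'⟩ ⟨p.reverse, hp.reverse⟩
      exact congrArg Subtype.val this
    rw [hq] at hEq
    have hsup := congrArg Walk.support hEq
    rw [Walk.support_cons, Walk.support_cons, r.reverse.support_eq_cons,
      q.support_eq_cons] at hsup
    simp only [List.cons.injEq] at hsup
    exact hsup.2.1

/-- in a partially dominated forest which is not completely dominated,
Staller has a legal move newly dominating at most two vertices. -/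
theorem stmt3 {V : Type*} [Fintype V] [DecidableEq V] (F : SimpleGraph V)
    (hF : F.IsAcyclic) (D : Finset V) (hD : D ≠ Finset.univ) :
    ∃ v : V, 1 ≤ ((DomGame.cn F v) \ D).card ∧ ((DomGame.cn F v) \ D).card ≤ 2 := by
  classical
  obtain ⟨u, hu⟩ : ∃ u, u ∉ D := by
    by_contra h
    push_neg at h
    exact hD (Finset.eq_univ_iff_forall.mpr h)
  set S : Finset V := Finset.univ.filter (fun x => x ∉ D ∧ F.Reachable u x) with hS
  have huS : u ∈ S := by
    rw [hS, Finset.mem_filter]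
    exact ⟨Finset.mem_univ _, hu, SimpleGraph.Reachable.refl u⟩
  obtain ⟨x, hxS, hxmax⟩ := Finset.exists_max_image S (fun x => F.dist u x) ⟨u, huS⟩
  rw [hS, Finset.mem_filter] at hxS
  obtain ⟨-, hxD, hxr⟩ := hxS
  have hxmem : x ∈ (DomGame.cn F x) \ D := by
    simp [DomGame.cn, Finset.mem_sdiff, hxD]
  have hmemS : ∀ y : V, F.Adj x y → y ∉ D → y ∈ S ∧ F.dist u y ≤ F.dist u x := by
    intro y hy hyD
    have hyS : y ∈ S := by
      rw [hS, Finset.mem_filter]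
      exact ⟨Finset.mem_univ _, hyD, hxr.trans hy.reachable⟩
    exact ⟨hyS, hxmax y hyS⟩
  refine ⟨x, Finset.one_le_card.mpr ⟨x, hxmem⟩, ?_⟩
  by_cases hxu : x = u
  · -- no undominated neighbors at all
    have hsub : (DomGame.cn F x) \ D ⊆ {x} := by
      intro y hy
      rw [Finset.mem_sdiff] at hy
      have hy1 : y = x ∨ F.Adj x y := by
        have := hy.1
        simp only [DomGame.cn, Finset.mem_filter] at this
        exact this.2
      rcases hy1 with h | h
      · simp [h]
      · exfalso
        obtain ⟨hyS, hdy⟩ := hmemS y h hy.2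
        subst hxu
        have : F.dist x y = 0 := by
          have := F.dist_self (v := x)
          omega
        have : x = y := ((hxr.trans h.reachable).dist_eq_zero_iff).mp this
        exact F.irrefl (this ▸ h)
    calc ((DomGame.cn F x) \ D).card ≤ ({x} : Finset V).card := Finset.card_le_card hsub
      _ ≤ 2 := by simp
  · obtain ⟨w, hw⟩ := stmt3_key F hF hxu hxr
    have hsub : (DomGame.cn F x) \ D ⊆ {x, w} := by
      intro y hy
      rw [Finset.mem_sdiff] at hy
      have hy1 : y = x ∨ F.Adj x y := by
        have := hy.1
        simp only [DomGame.cn, Finset.mem_filter] at this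
        exact this.2
      rcases hy1 with h | h
      · simp [h]
      · obtain ⟨hyS, hdy⟩ := hmemS y h hy.2
        simp [hw y h hdy]
    calc ((DomGame.cn F x) \ D).card ≤ ({x, w} : Finset V).card := Finset.card_le_card hsub
      _ ≤ 2 := Finset.card_insert_le _ _ |>.trans (by simp)
end
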